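/- Let n ≥ 2 be an integer. For all real x with −1/2 < x < 1/2, one has 8(Π_n(x)² − Π_{n,0}²)·Π_n(x)²·Σ_{n−1}(x)·Σ_{n−3}(x) − 16(Π_n(x)² − Π_{n,0}²)·Π_n(x)²·Σ_{n−2}(x)² ≥ 0. -/

import Mathlib

open Finset

/-- `Π_n(x) = ∏_{k=1}^n (x² − (k−1/2)²)`. -/
noncomputable def PiN (n : ℕ) (x : ℝ) : ℝ :=
  ∏ k ∈ Finset.Icc 1 n, (x ^ 2 - ((k : ℝ) - 1 / 2) ^ 2)

/-- `Π_{n,0} = ∏_{k=1}^n (k−1/2)²`. -/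
noncomputable def PiN0 (n : ℕ) : ℝ :=
  ∏ k ∈ Finset.Icc 1 n, ((k : ℝ) - 1 / 2) ^ 2

/-- `Σ_i(x) = ∑_{P ⊆ {1,…,n}, |P| = i} ∏_{j ∈ P} (x² − (j−1/2)²)`, with `Σ_i = 0` for `i < 0`. -/
noncomputable def Sig (n : ℕ) (i : ℤ) (x : ℝ) : ℝ :=
  if 0 ≤ i then
    ∑ P ∈ (Finset.Icc 1 n).powersetCard i.toNat, ∏ j ∈ P, (x ^ 2 - ((j : ℝ) - 1 / 2) ^ 2)
  else 0

noncomputable def Esum (s : Finset ℕ) (k : ℕ) (z : ℕ → ℝ) : ℝ :=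
  ∑ P ∈ s.powersetCard k, ∏ j ∈ P, z j

lemma Esum_zero (s : Finset ℕ) (z : ℕ → ℝ) : Esum s 0 z = 1 := by
  simp [Esum, Finset.powersetCard_zero]

lemma Esum_big (s : Finset ℕ) (k : ℕ) (hk : s.card < k) (z : ℕ → ℝ) : Esum s k z = 0 := by
  rw [Esum, Finset.powersetCard_eq_empty.2 hk, Finset.sum_empty]

lemma Esum_insert (a : ℕ) (s : Finset ℕ) (ha : a ∉ s) (k : ℕ) (z : ℕ → ℝ) :
    Esum (insert a s) (k + 1) z = z a * Esum s k z + Esum s (k + 1) z := by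
  rw [Esum, Finset.powersetCard_succ_insert ha, Finset.sum_union, Finset.sum_image]
  · rw [add_comm, Esum, Esum, Finset.mul_sum]
    congr 1
    refine Finset.sum_congr rfl fun P hP => ?_
    rw [Finset.prod_insert fun h => ha ((Finset.mem_powersetCard.1 hP).1 h)]
  · intro P hP Q hQ h
    have hP' : a ∉ P := fun h' => ha ((Finset.mem_powersetCard.1 hP).1 h')
    have hQ' : a ∉ Q := fun h' => ha ((Finset.mem_powersetCard.1 hQ).1 h')
    have := congrArg (fun T => Finset.erase T a) h
    simpa [Finset.erase_insert hP', Finset.erase_insert hQ'] using this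
  · rw [Finset.disjoint_right]
    rintro P hP hP2
    obtain ⟨Q, hQ, rfl⟩ := Finset.mem_image.1 hP
    exact ha ((Finset.mem_powersetCard.1 hP2).1 (Finset.mem_insert_self a Q))

lemma Esum_nonneg (s : Finset ℕ) (k : ℕ) (z : ℕ → ℝ) (hz : ∀ j ∈ s, 0 ≤ z j) :
    0 ≤ Esum s k z := by
  refine Finset.sum_nonneg fun P hP => Finset.prod_nonneg fun j hj => ?_
  exact hz j ((Finset.mem_powersetCard.1 hP).1 hj)

lemma newton_all (s : Finset ℕ) (z : ℕ → ℝ) (hz : ∀ j ∈ s, 0 ≤ z j) :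
    2 * Esum s 2 z ≤ Esum s 1 z ^ 2 ∧ 3 * Esum s 3 z ≤ Esum s 1 z * Esum s 2 z ∧
      Esum s 1 z * Esum s 3 z ≤ 2 * Esum s 2 z ^ 2 := by
  induction s using Finset.induction with
  | empty =>
    simp [Esum_big ∅ 1 (by simp), Esum_big ∅ 2 (by simp), Esum_big ∅ 3 (by simp)]
  | insert a s ha ih =>
    have hz' : ∀ j ∈ s, 0 ≤ z j := fun j hj => hz j (Finset.mem_insert_of_mem hj)
    obtain ⟨h1, h2, h3⟩ := ih hz'
    have hza : 0 ≤ z a := hz a (Finset.mem_insert_self a s)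
    have e1 := Esum_insert a s ha 0 z
    have e2 := Esum_insert a s ha 1 z
    have e3 := Esum_insert a s ha 2 z
    rw [Esum_zero] at e1
    have n1 := Esum_nonneg s 1 z hz'
    have n2 := Esum_nonneg s 2 z hz'
    have n3 := Esum_nonneg s 3 z hz'
    refine ⟨?_, ?_, ?_⟩
    · rw [show (0:ℕ)+1 = 1 from rfl] at e1
      rw [show (1:ℕ)+1 = 2 from rfl] at e2
      rw [e1, e2]; nlinarith [sq_nonneg (z a), mul_nonneg hza n1]
    · rw [show (0:ℕ)+1 = 1 from rfl] at e1
      rw [show (1:ℕ)+1 = 2 from rfl] at e2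
      rw [show (2:ℕ)+1 = 3 from rfl] at e3
      rw [e1, e2, e3]
      nlinarith [mul_le_mul_of_nonneg_left h1 hza, mul_nonneg (mul_nonneg hza hza) n1,
        mul_nonneg hza n2]
    · rw [show (0:ℕ)+1 = 1 from rfl] at e1
      rw [show (1:ℕ)+1 = 2 from rfl] at e2
      rw [show (2:ℕ)+1 = 3 from rfl] at e3
      rw [e1, e2, e3]
      nlinarith [mul_le_mul_of_nonneg_left h1 (mul_nonneg hza hza),
        mul_le_mul_of_nonneg_left h2 hza, sq_nonneg (Esum s 1 z), mul_nonneg hza n3]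

lemma Esum_compl (s : Finset ℕ) (k : ℕ) (hk : k ≤ s.card) (y : ℕ → ℝ)
    (hy : ∀ j ∈ s, y j ≠ 0) :
    Esum s (s.card - k) y = (∏ j ∈ s, y j) * Esum s k (fun j => (y j)⁻¹) := by
  rw [Esum, Esum, Finset.mul_sum]
  refine Finset.sum_nbij' (fun P => s \ P) (fun T => s \ T) ?_ ?_ ?_ ?_ ?_
  · intro P hP
    obtain ⟨hsub, hcard⟩ := Finset.mem_powersetCard.1 hP
    rw [Finset.mem_powersetCard]
    refine ⟨Finset.sdiff_subset, ?_⟩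
    rw [Finset.card_sdiff_of_subset hsub, hcard]
    omega
  · intro T hT
    obtain ⟨hsub, hcard⟩ := Finset.mem_powersetCard.1 hT
    rw [Finset.mem_powersetCard]
    exact ⟨Finset.sdiff_subset, by rw [Finset.card_sdiff_of_subset hsub, hcard]⟩
  · intro P hP
    exact Finset.sdiff_sdiff_eq_self (Finset.mem_powersetCard.1 hP).1
  · intro T hT
    exact Finset.sdiff_sdiff_eq_self (Finset.mem_powersetCard.1 hT).1
  · intro P hP
    obtain ⟨hsub, hcard⟩ := Finset.mem_powersetCard.1 hP
    have h1 : ∏ j ∈ s \ P, (fun j => (y j)⁻¹) j = (∏ j ∈ s \ P, y j)⁻¹ := by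
      simp [Finset.prod_inv_distrib]
    rw [h1, ← Finset.prod_sdiff hsub]
    have hne : ∏ j ∈ s \ P, y j ≠ 0 :=
      Finset.prod_ne_zero_iff.2 fun j hj => hy j (Finset.mem_sdiff.1 hj).1
    field_simp

theorem stmt1 (n : ℕ) (hn : 2 ≤ n) (x : ℝ) (hx : x ∈ Set.Ioo (-(1 / 2) : ℝ) (1 / 2)) :
    8 * ((PiN n x) ^ 2 - (PiN0 n) ^ 2) * (PiN n x) ^ 2 * Sig n ((n : ℤ) - 1) x *
        Sig n ((n : ℤ) - 3) x
      - 16 * ((PiN n x) ^ 2 - (PiN0 n) ^ 2) * (PiN n x) ^ 2 *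
        (Sig n ((n : ℤ) - 2) x) ^ 2 ≥ 0 := by
  obtain ⟨hx1, hx2⟩ := hx
  set s : Finset ℕ := Finset.Icc 1 n with hs
  set y : ℕ → ℝ := fun j => ((j : ℝ) - 1 / 2) ^ 2 - x ^ 2 with hy
  have hcard : s.card = n := by rw [hs, Nat.card_Icc]; omega
  have hypos : ∀ j ∈ s, 0 < y j := by
    intro j hj
    have hj1 : 1 ≤ j := (Finset.mem_Icc.1 hj).1
    have : (1 : ℝ) ≤ (j : ℝ) := by exact_mod_cast hj1
    simp only [hy]
    nlinarith
  have hyne : ∀ j ∈ s, y j ≠ 0 := fun j hj => ne_of_gt (hypos j hj)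
  set z : ℕ → ℝ := fun j => (y j)⁻¹ with hz
  have hzpos : ∀ j ∈ s, 0 ≤ z j := fun j hj => le_of_lt (inv_pos.2 (hypos j hj))
  set D : ℝ := ∏ j ∈ s, y j with hD
  -- Sig in terms of Esum
  have hSig : ∀ k : ℕ, k ≤ n →
      Sig n ((n : ℤ) - k) x = (-1 : ℝ) ^ (n - k) * Esum s (n - k) y := by
    intro k hk
    rw [Sig, if_pos (by omega)]
    have ht : ((n : ℤ) - k).toNat = n - k := by omega
    rw [ht, Esum, Finset.mul_sum]
    refine Finset.sum_congr rfl fun P hP => ?_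
    obtain ⟨hsub, hcardP⟩ := Finset.mem_powersetCard.1 hP
    have : ∀ j ∈ P, x ^ 2 - ((j : ℝ) - 1 / 2) ^ 2 = (-1) * y j := by
      intro j hj; simp [hy]
    rw [Finset.prod_congr rfl this, Finset.prod_mul_distrib, Finset.prod_const, hcardP]
  have hcompl : ∀ k : ℕ, k ≤ n → Esum s (n - k) y = D * Esum s k z := by
    intro k hk
    rw [← hcard, Esum_compl s k (by omega) y hyne]
  -- products of Sigs
  have hP13 : Sig n ((n : ℤ) - 1) x * Sig n ((n : ℤ) - 3) x =
      D ^ 2 * (Esum s 1 z * Esum s 3 z) := by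
    by_cases h3 : 3 ≤ n
    · rw [show ((n : ℤ) - 1) = (n : ℤ) - (1 : ℕ) by norm_num,
        show ((n : ℤ) - 3) = (n : ℤ) - (3 : ℕ) by norm_num,
        hSig 1 (by omega), hSig 3 h3, hcompl 1 (by omega), hcompl 3 h3]
      have hsign : (-1 : ℝ) ^ (n - 1) * (-1 : ℝ) ^ (n - 3) = 1 := by
        rw [← pow_add, show n - 1 + (n - 3) = 2 * (n - 2) by omega, pow_mul]
        norm_num
      linear_combination (D ^ 2 * Esum s 1 z * Esum s 3 z) * hsign
    · have hn2 : n = 2 := by omega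
      have hz3 : Esum s 3 z = 0 := Esum_big s 3 (by omega) z
      have hs3 : Sig n ((n : ℤ) - 3) x = 0 := by
        rw [Sig, if_neg (by omega)]
      rw [hs3, hz3]; ring
  have hP22 : (Sig n ((n : ℤ) - 2) x) ^ 2 = D ^ 2 * (Esum s 2 z) ^ 2 := by
    rw [show ((n : ℤ) - 2) = (n : ℤ) - (2 : ℕ) by norm_num, hSig 2 hn, hcompl 2 hn]
    rw [mul_pow, mul_pow, ← pow_mul]
    rw [show (n - 2) * 2 = 2 * (n - 2) by ring, pow_mul]
    norm_num
  -- PiN^2 ≤ PiN0^2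
  have hPi : (PiN n x) ^ 2 ≤ (PiN0 n) ^ 2 := by
    rw [PiN, PiN0, ← Finset.prod_pow, ← Finset.prod_pow]
    refine Finset.prod_le_prod (fun j hj => sq_nonneg _) ?_
    intro j hj
    have := hypos j hj
    simp only [hy] at this
    nlinarith [sq_nonneg x]
  -- Newton inequality
  obtain ⟨-, -, hnewt⟩ := newton_all s z hzpos
  have geq : 8 * ((PiN n x) ^ 2 - (PiN0 n) ^ 2) * (PiN n x) ^ 2 * Sig n ((n : ℤ) - 1) x *
        Sig n ((n : ℤ) - 3) x
      - 16 * ((PiN n x) ^ 2 - (PiN0 n) ^ 2) * (PiN n x) ^ 2 *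
        (Sig n ((n : ℤ) - 2) x) ^ 2
      = 8 * ((PiN n x) ^ 2 - (PiN0 n) ^ 2) * (PiN n x) ^ 2 *
        (D ^ 2 * (Esum s 1 z * Esum s 3 z))
      - 16 * ((PiN n x) ^ 2 - (PiN0 n) ^ 2) * (PiN n x) ^ 2 *
        (D ^ 2 * (Esum s 2 z) ^ 2) := by
    rw [← hP13, ← hP22]; ring
  rw [ge_iff_le, geq]
  have key : 0 ≤ ((PiN0 n) ^ 2 - (PiN n x) ^ 2) * (PiN n x) ^ 2 * D ^ 2 *
      (2 * (Esum s 2 z) ^ 2 - Esum s 1 z * Esum s 3 z) := by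
    have h1 : 0 ≤ (PiN0 n) ^ 2 - (PiN n x) ^ 2 := by linarith
    have h2 : 0 ≤ 2 * (Esum s 2 z) ^ 2 - Esum s 1 z * Esum s 3 z := by linarith
    positivity
  nlinarith [key]
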